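/- arXiv:1810.07816 — 3 statements merged into one kernel-verified Lean document; each statement's English description precedes it below -/
import Mathlib

section
/- If a MAP instance G has at least one bad-pair, then there exists a bad-pair of G such that all but one of its bp-components contain no bad-pair of G (i.e., for all but one bp-component C, no bad-pair of G has both of its nodes in V(C)). -/
set_option autoImplicit false

/-!  A formal framework for the Matching Augmentation Problem (MAP):
loopless multigraphs with edge costs in `{0,1}` (given by the predicate
`isZero` marking the zero-edges). -/

/-- A finite loopless multigraph together with `{0,1}` edge costs:
`isZero e` means that the edge `e` has cost zero (otherwise it is a unit-edge). -/
structure CostGraph where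
  V : Type
  E : Type
  finV : Finite V
  finE : Finite E
  ends : E → Sym2 V
  loopless : ∀ e, ¬ (ends e).IsDiag
  isZero : E → Prop

namespace CostGraph

variable (G : CostGraph)

/-- `x` and `y` are joined by an edge of `F` and both lie in the node set `S`. -/
def Adj (S : Set G.V) (F : Set G.E) (x y : G.V) : Prop :=
  x ∈ S ∧ y ∈ S ∧ ∃ e ∈ F, G.ends e = s(x, y)

/-- Reachability in the sub-multigraph with node set `S` and edge set `F`. -/
def Reachable (S : Set G.V) (F : Set G.E) (x y : G.V) : Prop :=
  Relation.ReflTransGen (G.Adj S F) x y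

/-- The sub-multigraph with node set `S` and those edges of `F` having both
end nodes in `S` is connected (in particular `S` is nonempty). -/
def ConnectedOn (S : Set G.V) (F : Set G.E) : Prop :=
  S.Nonempty ∧ ∀ x ∈ S, ∀ y ∈ S, G.Reachable S F x y

/-- The sub-multigraph with node set `S` and edge set `F` is 2-edge-connected:
it has at least two nodes and removing any one edge leaves it connected. -/
def TwoECOn (S : Set G.V) (F : Set G.E) : Prop :=
  1 < S.ncard ∧ G.ConnectedOn S F ∧ ∀ e : G.E, G.ConnectedOn S (F \ {e})

/-- `F` is the edge set of a 2-edge-connected spanning subgraph (2-ECSS) of `G`. -/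
def TwoEC (F : Set G.E) : Prop := G.TwoECOn Set.univ F

/-- The cost of a set of edges: the number of unit-edges in it. -/
noncomputable def cost (F : Set G.E) : ℕ := {e ∈ F | ¬ G.isZero e}.ncard

/-- `opt G` is the minimum cost of a 2-ECSS of `G`. -/
noncomputable def opt : ℕ := sInf (G.cost '' {F | G.TwoEC F})

/-- `F` is a 2-edge cover: every node is incident to at least two edges of `F`. -/
def TwoEdgeCover (F : Set G.E) : Prop :=
  ∀ v : G.V, 2 ≤ {e ∈ F | v ∈ G.ends e}.ncard

/-- `tau G` is the minimum cost of a 2-edge cover of `G`. -/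
noncomputable def tau : ℕ := sInf (G.cost '' {F | G.TwoEdgeCover F})

/-- The zero-edges form a matching: no two distinct zero-edges share an end node. -/
def ZeroMatching : Prop :=
  ∀ e f : G.E, G.isZero e → G.isZero f → e ≠ f → ∀ x : G.V, x ∈ G.ends e → x ∉ G.ends f

/-- A MAP instance: a (finite, loopless) multigraph with `{0,1}` edge costs whose
zero-edges form a matching and which is 2-edge-connected. -/
def IsMAP : Prop := G.ZeroMatching ∧ G.TwoEC Set.univ

/-- The degree of a node: the number of edges incident to it. -/
noncomputable def degree (v : G.V) : ℕ := {e : G.E | v ∈ G.ends e}.ncard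

/-- `e, f` form a `{0,1}`-edge-pair: parallel edges, `e` of cost zero, `f` of cost one. -/
def IsZeroOnePair (e f : G.E) : Prop :=
  e ≠ f ∧ G.ends e = G.ends f ∧ G.isZero e ∧ ¬ G.isZero f

/-- `G` has no `{0,1}`-edge-pairs. -/
def NoZeroOnePair : Prop := ∀ e f, ¬ G.IsZeroOnePair e f

/-- `v` is a cut node: deleting `v` leaves a disconnected (or empty) graph. -/
def IsCutNode (v : G.V) : Prop := ¬ G.ConnectedOn ({v}ᶜ) Set.univ

/-- `{v, w}` is a bad-pair: `vw` is a zero-edge and deleting both `v` and `w`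
disconnects the graph. -/
def IsBadPair (v w : G.V) : Prop :=
  (∃ e, G.isZero e ∧ G.ends e = s(v, w)) ∧
    ¬ G.ConnectedOn (({v, w} : Set G.V)ᶜ) Set.univ

/-- The number of bad-pairs of `G` (counted as unordered pairs). -/
noncomputable def badPairCount : ℕ :=
  {z : Sym2 G.V | ∃ a b, z = s(a, b) ∧ G.IsBadPair a b}.ncard

/-- `C` is (the node set of) a connected component of the sub-multigraph with node
set `S` and edge set `F`. -/
def IsCompOf (S : Set G.V) (F : Set G.E) (C : Set G.V) : Prop :=
  C ⊆ S ∧ C.Nonempty ∧ G.ConnectedOn C F ∧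
    ∀ x ∈ C, ∀ y ∈ S, G.Adj S F x y → y ∈ C

/-- `Q` is the node set of a redundant 4-cycle: a 4-cycle `u₁u₂u₃u₄` with
`V(C) ≠ V(G)`, two non-adjacent edges of cost zero and two non-adjacent nodes
of degree two in `G`. -/
def IsRed4CycleOn (Q : Set G.V) : Prop :=
  ∃ (u₁ u₂ u₃ u₄ : G.V) (e₁ e₂ e₃ e₄ : G.E),
    Q = {u₁, u₂, u₃, u₄} ∧
    u₁ ≠ u₂ ∧ u₁ ≠ u₃ ∧ u₁ ≠ u₄ ∧ u₂ ≠ u₃ ∧ u₂ ≠ u₄ ∧ u₃ ≠ u₄ ∧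
    e₁ ≠ e₂ ∧ e₁ ≠ e₃ ∧ e₁ ≠ e₄ ∧ e₂ ≠ e₃ ∧ e₂ ≠ e₄ ∧ e₃ ≠ e₄ ∧
    G.ends e₁ = s(u₁, u₂) ∧ G.ends e₂ = s(u₂, u₃) ∧
    G.ends e₃ = s(u₃, u₄) ∧ G.ends e₄ = s(u₄, u₁) ∧
    G.isZero e₁ ∧ G.isZero e₃ ∧
    G.degree u₂ = 2 ∧ G.degree u₄ = 2 ∧
    Q ≠ Set.univ

/-- A well-structured MAP instance: no `{0,1}`-edge-pairs, no redundant 4-cycles,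
no cut nodes and no bad-pairs. -/
def WellStructured : Prop :=
  G.IsMAP ∧ G.NoZeroOnePair ∧ (∀ Q, ¬ G.IsRed4CycleOn Q) ∧
    (∀ v, ¬ G.IsCutNode v) ∧ (∀ v w, ¬ G.IsBadPair v w)

/-- `G` is 2-node-connected: more than two nodes and deleting any one node
leaves a connected graph. -/
def TwoNC : Prop :=
  2 < Nat.card G.V ∧ ∀ v : G.V, G.ConnectedOn ({v}ᶜ) Set.univ

/-- Bridge of the sub-multigraph with node set `S` and edge set `F`: an edge of `F`
inside `S` whose removal disconnects its end nodes. -/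
def IsBridgeOn (S : Set G.V) (F : Set G.E) (e : G.E) : Prop :=
  e ∈ F ∧ (∀ x ∈ G.ends e, x ∈ S) ∧
    ∀ x y, G.ends e = s(x, y) → ¬ G.Reachable S (F \ {e}) x y

/-- Bridge of the spanning subgraph `(V, F)`. -/
def IsBridge (F : Set G.E) (e : G.E) : Prop := G.IsBridgeOn Set.univ F e

/-- `B` is (the node set of) a 2ec-block of the spanning subgraph `(V, F)`:
a maximal connected bridgeless subgraph with at least two nodes, equivalently a
connected component with at least two nodes of the graph obtained by deleting
all bridges. -/
def IsTwoECBlock (F : Set G.E) (B : Set G.V) : Prop :=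
  G.IsCompOf Set.univ (F \ {e | G.IsBridge F e}) B ∧ 2 ≤ B.ncard

/-- Delete a set `D` of edges. -/
noncomputable def deleteEdges (D : Set G.E) : CostGraph where
  V := G.V
  E := {e : G.E // e ∉ D}
  finV := G.finV
  finE := by haveI := G.finE; exact Subtype.finite
  ends e := G.ends e.1
  loopless e := G.loopless e.1
  isZero e := G.isZero e.1

/-- The sub-instance induced on a set `S` of nodes. -/
noncomputable def induce (S : Set G.V) : CostGraph where
  V := ↥S
  E := {e : G.E // ∀ x ∈ G.ends e, x ∈ S}
  finV := by haveI := G.finV; exact Subtype.finite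
  finE := by haveI := G.finE; exact Subtype.finite
  ends e := (G.ends e.1).pmap Subtype.mk e.2
  loopless e := by
    intro hd
    exact G.loopless e.1
      (by simpa [Sym2.pmap_subtype_map_subtypeVal] using hd.map (f := Subtype.val))
  isZero e := G.isZero e.1

/-- Contraction of `G` along (the equivalence generated by) a relation `R`:
node classes are identified, and edges joining identified nodes are removed
(no loops are created). -/
noncomputable def contract (R : G.V → G.V → Prop) : CostGraph where
  V := Quotient (Relation.EqvGen.setoid R)
  E := {e : G.E // ¬ (Sym2.map (Quotient.mk (Relation.EqvGen.setoid R)) (G.ends e)).IsDiag}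
  finV := by haveI := G.finV; exact Quotient.finite _
  finE := by haveI := G.finE; exact Subtype.finite
  ends e := Sym2.map (Quotient.mk (Relation.EqvGen.setoid R)) (G.ends e.1)
  loopless e := e.2
  isZero e := G.isZero e.1

/-- The relation identifying the nodes of each redundant 4-cycle. -/
def red4Rel (x y : G.V) : Prop := ∃ Q, G.IsRed4CycleOn Q ∧ x ∈ Q ∧ y ∈ Q

/-- The multigraph obtained from `G` by contracting all redundant 4-cycles. -/
noncomputable def contractRed4 : CostGraph := G.contract G.red4Rel

/-- For a bad-pair `{v,w}` and a bp-component `C`: the sub-instance `C^{v,w}`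
induced on `V(C) ∪ {v, w}`. -/
noncomputable def bpUp (v w : G.V) (C : Set G.V) : CostGraph :=
  G.induce (C ∪ {v, w})

/-- For a bad-pair `{v,w}` and a bp-component `C`: the instance `C^⊘`, obtained
from `C^{v,w}` by contracting the zero-edge `vw` if `C` has at least two nodes,
and equal to `C^{v,w}` if `C` has exactly one node. -/
noncomputable def bpContr (v w : G.V) (C : Set G.V) : CostGraph :=
  if 2 ≤ C.ncard then
    (G.bpUp v w C).contract (fun x y => x.1 = v ∧ y.1 = w)
  else G.bpUp v w C

/-- Every edge of `C^⊘` is an edge of `G`. -/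
noncomputable def bpContrEdge (v w : G.V) (C : Set G.V) :
    (G.bpContr v w C).E → G.E := by
  unfold bpContr
  by_cases h : 2 ≤ C.ncard
  · rw [if_pos h]; exact fun e => e.1.1
  · rw [if_neg h]; exact fun e => e.1

/-- The sub-multigraph `(S, F)` is 2-node-connected. -/
def TwoNCOn (S : Set G.V) (F : Set G.E) : Prop :=
  2 < S.ncard ∧ ∀ v : G.V, G.ConnectedOn (S \ {v}) F

/-- The sub-multigraph `(S, F)` consists of two nodes joined by two parallel edges. -/
def IsParallelPairBlock (S : Set G.V) (F : Set G.E) : Prop :=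
  S.ncard = 2 ∧ ∃ e f, e ≠ f ∧ G.ends e = G.ends f ∧ F = {e, f}

/-- `(B i, F i)` (for `i : Fin k`) are the blocks of `G`: each block is 2-node-connected
or a pair of nodes joined by two parallel edges, the edge set of `G` is partitioned
among the blocks, each `B i` is the set of end nodes of the edges of `F i`, and any
two blocks share at most one node. -/
def IsBlockDecomp {k : ℕ} (B : Fin k → Set G.V) (F : Fin k → Set G.E) : Prop :=
  (∀ i, ∀ e ∈ F i, ∀ x ∈ G.ends e, x ∈ B i) ∧
  (∀ i, B i = {x | ∃ e ∈ F i, x ∈ G.ends e}) ∧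
  (Set.univ : Set G.E) = ⋃ i, F i ∧
  (∀ i j, i ≠ j → Disjoint (F i) (F j)) ∧
  (∀ i j, i ≠ j → (B i ∩ B j).ncard ≤ 1) ∧
  (∀ i, G.TwoNCOn (B i) (F i) ∨ G.IsParallelPairBlock (B i) (F i))

end CostGraph

/-- `TauHatRel G t` holds when `t` is a value of `τ̂` for `G`, i.e. a value obtainable
by the following recursion: if `G` has no redundant 4-cycles and no cut nodes
(so it is well-structured provided it has no `{0,1}`-edge-pairs and no bad-pairs)
then `τ̂(G) = τ(G)`; otherwise contract all (`q`, say) redundant 4-cycles of `G`,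
split the resulting graph at its cut nodes into its blocks `G₁, …, G_k`, and set
`τ̂(G) = 2q + τ̂(G₁) + … + τ̂(G_k)`. -/
inductive TauHatRel : CostGraph → ℕ → Prop where
  | base (G : CostGraph)
      (h4 : ∀ Q, ¬ G.IsRed4CycleOn Q) (hc : ∀ v, ¬ G.IsCutNode v) :
      TauHatRel G G.tau
  | step (G : CostGraph) (k : ℕ)
      (B : Fin k → Set G.contractRed4.V) (F : Fin k → Set G.contractRed4.E)
      (t : Fin k → ℕ)
      (hobstr : (∃ Q, G.IsRed4CycleOn Q) ∨ (∃ v, G.IsCutNode v))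
      (hdec : G.contractRed4.IsBlockDecomp B F)
      (ht : ∀ i, TauHatRel (G.contractRed4.induce (B i)) (t i)) :
      TauHatRel G (2 * {Q | G.IsRed4CycleOn Q}.ncard + ∑ i, t i)

namespace CostGraph

/-- `τ̂(G)`: the value associated to `G` by the recursion of `TauHatRel`. -/
noncomputable def tauHat (G : CostGraph) : ℕ := sInf {t | TauHatRel G t}

open Classical in
/-- The lower bound `lb(G)`: `τ̂(G)` if `G` has no `{0,1}`-edge-pairs, no cut nodes
and no bad-pairs, and `opt(G)` otherwise. -/
noncomputable def lb (G : CostGraph) : ℕ :=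
  if G.NoZeroOnePair ∧ (∀ v, ¬ G.IsCutNode v) ∧ (∀ v w, ¬ G.IsBadPair v w)
  then G.tauHat else G.opt

end CostGraph

section AuxStatement4

open Relation

variable {G : CostGraph}

private lemma aux_adj_symm {S : Set G.V} {F : Set G.E} {x y : G.V}
    (h : G.Adj S F x y) : G.Adj S F y x := by
  obtain ⟨hx, hy, e, he, hends⟩ := h
  exact ⟨hy, hx, e, he, hends.trans (Sym2.eq_swap)⟩

private lemma aux_reach_symm {S : Set G.V} {F : Set G.E} {x y : G.V}
    (h : G.Reachable S F x y) : G.Reachable S F y x := by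
  induction h with
  | refl => exact .refl
  | tail _ hstep ih => exact (Relation.ReflTransGen.single (aux_adj_symm hstep)).trans ih

private lemma aux_mem_of_reach {S : Set G.V} {F : Set G.E} {C : Set G.V} {x y : G.V}
    (hC : G.IsCompOf S F C) (hx : x ∈ C) (h : G.Reachable S F x y) : y ∈ C := by
  induction h with
  | refl => exact hx
  | tail _ hstep ih => exact hC.2.2.2 _ ih _ hstep.2.1 hstep

private lemma aux_reach_mono {C' S : Set G.V} {F : Set G.E} {x y : G.V}
    (hsub : C' ⊆ S) (h : G.Reachable C' F x y) : G.Reachable S F x y :=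
  Relation.ReflTransGen.mono (r := G.Adj C' F) (p := G.Adj S F)
    (show ∀ a b, G.Adj C' F a b → G.Adj S F a b from
      fun _ _ hadj => ⟨hsub hadj.1, hsub hadj.2.1, hadj.2.2⟩) x y h

private lemma aux_comp_subset {S : Set G.V} {F : Set G.E} {C C' : Set G.V} {z : G.V}
    (hC : G.IsCompOf S F C) (hC' : G.IsCompOf S F C') (hz : z ∈ C) (hz' : z ∈ C') :
    C' ⊆ C := fun y hy =>
  aux_mem_of_reach hC hz (aux_reach_mono hC'.1 (hC'.2.2.1.2 z hz' y hy))

private lemma aux_comp_eq {S : Set G.V} {F : Set G.E} {C C' : Set G.V} {z : G.V}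
    (hC : G.IsCompOf S F C) (hC' : G.IsCompOf S F C') (hz : z ∈ C) (hz' : z ∈ C') :
    C = C' :=
  Set.Subset.antisymm (aux_comp_subset hC' hC hz' hz) (aux_comp_subset hC hC' hz hz')

private lemma aux_exists_comp {S : Set G.V} {x : G.V} (hx : x ∈ S) :
    ∃ D, G.IsCompOf S Set.univ D ∧ x ∈ D := by
  refine ⟨{y | y ∈ S ∧ G.Reachable S Set.univ x y}, ?_, ⟨hx, .refl⟩⟩
  have hreachD : ∀ y, G.Reachable S Set.univ x y →
      G.Reachable {y | y ∈ S ∧ G.Reachable S Set.univ x y} Set.univ x y := by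
    intro y h
    induction h with
    | refl => exact .refl
    | @tail c y h hstep ih =>
      exact ih.tail ⟨⟨hstep.1, h⟩, ⟨hstep.2.1, h.tail hstep⟩, hstep.2.2⟩
  refine ⟨fun y hy => hy.1, ⟨x, hx, .refl⟩,
    ⟨⟨x, hx, .refl⟩, fun p hp q hq => (aux_reach_symm (hreachD p hp.2)).trans (hreachD q hq.2)⟩,
    fun p hp q hq hadj => ⟨hq, hp.2.tail hadj⟩⟩

private lemma aux_reach_to_v (hconn : G.ConnectedOn Set.univ Set.univ)
    {v w : G.V} {C : Set G.V} (hC : G.IsCompOf (({v, w} : Set G.V)ᶜ) Set.univ C)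
    {a b : G.V} (haC : a ∈ C) (hbC : b ∈ C)
    {e : G.E} (he : G.ends e = s(v, w)) :
    ∀ x, x ∉ C → G.Reachable (({a, b} : Set G.V)ᶜ) Set.univ x v := by
  have haN := hC.1 haC
  have hbN := hC.1 hbC
  simp only [Set.mem_compl_iff, Set.mem_insert_iff, Set.mem_singleton_iff, not_or] at haN hbN
  have hnp : ∀ z, z ≠ a → z ≠ b → z ∈ (({a, b} : Set G.V)ᶜ) := by
    intro z h1 h2; simp [h1, h2]
  intro x hx
  have hr := hconn.2 x (Set.mem_univ x) v (Set.mem_univ v)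
  revert hx
  induction hr using Relation.ReflTransGen.head_induction_on with
  | refl => intro _; exact .refl
  | @head y c h' htail ih =>
    intro hx
    by_cases hcC : c ∈ C
    · have hyS : y ∉ (({v, w} : Set G.V)ᶜ) := by
        intro hyS
        obtain ⟨_, _, e', _, hends⟩ := h'
        exact hx (hC.2.2.2 c hcC y hyS
          ⟨hC.1 hcC, hyS, e', Set.mem_univ e', hends.trans (Sym2.eq_swap)⟩)
      simp only [Set.mem_compl_iff, Set.mem_insert_iff, Set.mem_singleton_iff,
        not_not] at hyS
      rcases hyS with rfl | rfl
      · exact .refl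
      · exact Relation.ReflTransGen.single
          ⟨hnp y (Ne.symm haN.2) (Ne.symm hbN.2), hnp v (Ne.symm haN.1) (Ne.symm hbN.1),
            e, Set.mem_univ e, he.trans (Sym2.eq_swap)⟩
    · refine (ih hcC).head ⟨hnp y ?_ ?_, hnp c ?_ ?_, h'.2.2⟩
      · exact fun h => hx (h ▸ haC)
      · exact fun h => hx (h ▸ hbC)
      · exact fun h => hcC (h ▸ haC)
      · exact fun h => hcC (h ▸ hbC)

private lemma aux_main (G : CostGraph) (hG : G.IsMAP) :
    ∀ (n : ℕ) (v w : G.V) (C : Set G.V), G.IsBadPair v w →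
      G.IsCompOf (({v, w} : Set G.V)ᶜ) Set.univ C →
      (∃ a b, G.IsBadPair a b ∧ a ∈ C ∧ b ∈ C) → C.ncard ≤ n →
      ∃ v w, G.IsBadPair v w ∧
        ∀ C C' : Set G.V,
          G.IsCompOf (({v, w} : Set G.V)ᶜ) Set.univ C →
          G.IsCompOf (({v, w} : Set G.V)ᶜ) Set.univ C' →
          (∃ a b, G.IsBadPair a b ∧ a ∈ C ∧ b ∈ C) →
          (∃ a b, G.IsBadPair a b ∧ a ∈ C' ∧ b ∈ C') → C = C' := by
  haveI := G.finV
  intro n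
  induction n with
  | zero =>
    intro v w C _ hC _ hle
    have h0 : 0 < C.ncard := (Set.ncard_pos (Set.toFinite C)).mpr hC.2.1
    omega
  | succ n ih =>
    intro v w C hvw hC hbad hle
    obtain ⟨a, b, hab, haC, hbC⟩ := hbad
    by_cases hsol : ∀ C₁ C₂ : Set G.V,
        G.IsCompOf (({a, b} : Set G.V)ᶜ) Set.univ C₁ →
        G.IsCompOf (({a, b} : Set G.V)ᶜ) Set.univ C₂ →
        (∃ x y, G.IsBadPair x y ∧ x ∈ C₁ ∧ y ∈ C₁) →
        (∃ x y, G.IsBadPair x y ∧ x ∈ C₂ ∧ y ∈ C₂) → C₁ = C₂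
    · exact ⟨a, b, hab, hsol⟩
    · push_neg at hsol
      obtain ⟨E₁, E₂, h1, h2, hb1, hb2, hne⟩ := hsol
      have haN := hC.1 haC
      have hbN := hC.1 hbC
      simp only [Set.mem_compl_iff, Set.mem_insert_iff, Set.mem_singleton_iff,
        not_or] at haN hbN
      have hvab : v ∈ (({a, b} : Set G.V)ᶜ) := by
        simp [Ne.symm haN.1, Ne.symm hbN.1]
      obtain ⟨D, hD, hvD⟩ := aux_exists_comp hvab
      obtain ⟨E, hE, hbadE, hED⟩ :
          ∃ E, G.IsCompOf (({a, b} : Set G.V)ᶜ) Set.univ E ∧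
            (∃ x y, G.IsBadPair x y ∧ x ∈ E ∧ y ∈ E) ∧ E ≠ D := by
        by_cases hq : E₁ = D
        · exact ⟨E₂, h2, hb2, fun hh => hne (hq.trans hh.symm)⟩
        · exact ⟨E₁, h1, hb1, hq⟩
      obtain ⟨e, _, he⟩ := hvw.1
      have hconn : G.ConnectedOn Set.univ Set.univ := hG.2.2.1
      have hsub : E ⊆ C := by
        intro x hxE
        by_contra hxC
        have hr := aux_reach_to_v hconn hC haC hbC he x hxC
        have hvE : v ∈ E := aux_mem_of_reach hE hxE hr
        exact hED (aux_comp_eq hE hD hvE hvD)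
      have haE : a ∉ E := by
        intro hmem
        have := hE.1 hmem
        simp at this
      have hlt : E.ncard < C.ncard :=
        Set.ncard_lt_ncard ((Set.ssubset_iff_of_subset hsub).mpr ⟨a, haC, haE⟩)
          (Set.toFinite C)
      exact ih a b E hab hE hbadE (by omega)

end AuxStatement4

/-- If a MAP instance `G` has at least one bad-pair, then there is
a bad-pair of `G` such that all but one of its bp-components contain no bad-pair
of `G` (i.e. at most one bp-component contains both nodes of some bad-pair). -/
theorem exists_badPair_with_leaf_bpComponents (G : CostGraph) (hG : G.IsMAP)
    (h : ∃ v w, G.IsBadPair v w) :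
    ∃ v w, G.IsBadPair v w ∧
      ∀ C C' : Set G.V,
        G.IsCompOf (({v, w} : Set G.V)ᶜ) Set.univ C →
        G.IsCompOf (({v, w} : Set G.V)ᶜ) Set.univ C' →
        (∃ a b, G.IsBadPair a b ∧ a ∈ C ∧ b ∈ C) →
        (∃ a b, G.IsBadPair a b ∧ a ∈ C' ∧ b ∈ C') → C = C' := by
  obtain ⟨v, w, hvw⟩ := h
  by_cases hsol : ∀ C C' : Set G.V,
      G.IsCompOf (({v, w} : Set G.V)ᶜ) Set.univ C →
      G.IsCompOf (({v, w} : Set G.V)ᶜ) Set.univ C' →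
      (∃ a b, G.IsBadPair a b ∧ a ∈ C ∧ b ∈ C) →
      (∃ a b, G.IsBadPair a b ∧ a ∈ C' ∧ b ∈ C') → C = C'
  · exact ⟨v, w, hvw, hsol⟩
  · push_neg at hsol
    obtain ⟨C, C', hC, hC', hb1, hb2, hne⟩ := hsol
    exact aux_main G hG C.ncard v w C hvw hC hb1 le_rfl
end

section
/- Let H be an edge-minimal 2-edge-connected multigraph (no proper spanning subgraph of H is 2-edge-connected), and let e₁, e₂ be a pair of parallel edges of H. Then H − {e₁, e₂} has exactly two connected components, and each of these components is either a single node or 2-edge-connected. -/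
set_option autoImplicit false

section AuxForStatement5

namespace CostGraph

variable {H : CostGraph}

lemma adj_symm' {S : Set H.V} {F : Set H.E} {x y : H.V} (h : H.Adj S F x y) :
    H.Adj S F y x := by
  obtain ⟨hx, hy, e, he, hee⟩ := h
  exact ⟨hy, hx, e, he, by rw [hee, Sym2.eq_swap]⟩

lemma reach_symm' {S : Set H.V} {F : Set H.E} {x y : H.V}
    (h : H.Reachable S F x y) : H.Reachable S F y x :=
  by haveI : Std.Symm (H.Adj S F) := ⟨fun _ _ hh => adj_symm' hh⟩
     exact Relation.ReflTransGen.symmetric.symm _ _ h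

lemma reach_trans' {S : Set H.V} {F : Set H.E} {x y z : H.V}
    (h : H.Reachable S F x y) (h' : H.Reachable S F y z) : H.Reachable S F x z :=
  Relation.ReflTransGen.trans h h'

lemma reach_transfer' {S1 S2 : Set H.V} {F1 F2 : Set H.E} {x y : H.V}
    (h : ∀ a b, H.Adj S1 F1 a b → H.Reachable S2 F2 a b)
    (hr : H.Reachable S1 F1 x y) : H.Reachable S2 F2 x y := by
  induction hr with
  | refl => exact Relation.ReflTransGen.refl
  | tail _ hadj ih => exact reach_trans' ih (h _ _ hadj)

/-- The connected component containing `x` (spanning node set, edge set `F`). -/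
def comp' (H : CostGraph) (F : Set H.E) (x : H.V) : Set H.V :=
  {y | H.Reachable Set.univ F x y}

lemma mem_comp_self' (F : Set H.E) (x : H.V) : x ∈ H.comp' F x :=
  Relation.ReflTransGen.refl

lemma comp_isComp' (F : Set H.E) (x : H.V) :
    H.IsCompOf Set.univ F (H.comp' F x) := by
  refine ⟨fun _ _ => trivial, ⟨x, mem_comp_self' F x⟩,
    ⟨⟨x, mem_comp_self' F x⟩, ?_⟩, ?_⟩
  · intro a ha b hb
    have ha' : H.Reachable Set.univ F x a := ha
    have hab : H.Reachable Set.univ F a b :=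
      reach_trans' (reach_symm' ha') hb
    clear hb
    induction hab with
    | refl => exact Relation.ReflTransGen.refl
    | @tail p q hr hadj ih =>
        have hp : p ∈ H.comp' F x := reach_trans' ha' hr
        have hq : q ∈ H.comp' F x :=
          reach_trans' hp (Relation.ReflTransGen.single hadj)
        exact Relation.ReflTransGen.tail ih ⟨hp, hq, hadj.2.2⟩
  · intro a ha b _ hadj
    exact reach_trans' ha (Relation.ReflTransGen.single hadj)

lemma isCompOf_eq_comp' {F : Set H.E} {D : Set H.V}
    (hD : H.IsCompOf Set.univ F D) {x : H.V} (hx : x ∈ D) :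
    D = H.comp' F x := by
  apply Set.Subset.antisymm
  · intro y hy
    have hr : H.Reachable D F x y := hD.2.2.1.2 x hx y hy
    exact reach_transfer' (fun a b hab =>
      Relation.ReflTransGen.single ⟨trivial, trivial, hab.2.2⟩) hr
  · intro y hy
    have hy' : H.Reachable Set.univ F x y := hy
    clear hy
    induction hy' with
    | refl => exact hx
    | @tail p q hr hadj ih => exact hD.2.2.2 p ih q trivial hadj

lemma comp_congr' {F : Set H.E} {x y : H.V} (h : H.Reachable Set.univ F x y) :
    H.comp' F x = H.comp' F y :=
  Set.ext fun z => ⟨fun hz => reach_trans' (reach_symm' h) hz,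
    fun hz => reach_trans' h hz⟩

/-- Step A: in an edge-minimal 2EC graph, removing a parallel pair disconnects
its end nodes. -/
lemma not_reach_aux' (H : CostGraph) (h2 : H.TwoEC Set.univ)
    (hmin : ∀ F : Set H.E, F ≠ Set.univ → ¬ H.TwoEC F)
    {e₁ e₂ : H.E} (hne : e₁ ≠ e₂) (hpar : H.ends e₁ = H.ends e₂)
    {u v : H.V} (huv : H.ends e₁ = s(u, v)) :
    ¬ H.Reachable Set.univ (Set.univ \ {e₁, e₂}) u v := by
  intro hreach
  apply hmin (Set.univ \ {e₂}) (by
    intro h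
    have h2' : e₂ ∈ Set.univ \ ({e₂} : Set H.E) := by
      rw [h]; exact Set.mem_univ e₂
    exact h2'.2 rfl)
  obtain ⟨hcard, hconn, hdel⟩ := h2
  refine ⟨hcard, hdel e₂, fun f => ?_⟩
  refine ⟨(hdel e₂).1, ?_⟩
  intro x _ y _
  by_cases hfe : f = e₁
  · subst f
    have hbase : H.Reachable Set.univ (Set.univ \ {e₁}) x y :=
      (hdel e₁).2 x trivial y trivial
    refine reach_transfer' ?_ hbase
    rintro a b ⟨-, -, g, hg, hge⟩
    by_cases hg2 : g = e₂
    · subst g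
      have hsab : s(u, v) = s(a, b) := by rw [← huv, hpar]; exact hge
      have hsub : H.Reachable Set.univ ((Set.univ \ {e₂}) \ {e₁}) u v := by
        refine reach_transfer' ?_ hreach
        rintro a' b' ⟨-, -, g', hg', hge'⟩
        exact Relation.ReflTransGen.single ⟨trivial, trivial, g',
          ⟨⟨trivial, fun h => hg'.2 (Set.mem_insert_iff.mpr (Or.inr h))⟩,
            fun h => hg'.2 (Set.mem_insert_iff.mpr (Or.inl h))⟩, hge'⟩
      rw [Sym2.eq_iff] at hsab
      rcases hsab with ⟨rfl, rfl⟩ | ⟨rfl, rfl⟩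
      · exact hsub
      · exact reach_symm' hsub
    · exact Relation.ReflTransGen.single ⟨trivial, trivial, g,
        ⟨⟨trivial, fun h => hg2 h⟩, fun h => hg.2 h⟩, hge⟩
  · have hbase : H.Reachable Set.univ (Set.univ \ {f}) x y :=
      (hdel f).2 x trivial y trivial
    refine reach_transfer' ?_ hbase
    rintro a b ⟨-, -, g, hg, hge⟩
    by_cases hg2 : g = e₂
    · subst g
      exact Relation.ReflTransGen.single ⟨trivial, trivial, e₁,
        ⟨⟨trivial, fun h => hne h⟩, fun h => hfe h.symm⟩,
          by rw [hpar]; exact hge⟩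
    · exact Relation.ReflTransGen.single ⟨trivial, trivial, g,
        ⟨⟨trivial, fun h => hg2 h⟩, fun h => hg.2 h⟩, hge⟩

/-- Step B: every node reaches `u` or `v` after deleting the parallel pair. -/
lemma reach_u_or_v' (H : CostGraph) (h2 : H.TwoEC Set.univ)
    {e₁ e₂ : H.E} (hpar : H.ends e₁ = H.ends e₂)
    {u v : H.V} (huv : H.ends e₁ = s(u, v)) (x : H.V) :
    H.Reachable Set.univ (Set.univ \ {e₁, e₂}) u x ∨
    H.Reachable Set.univ (Set.univ \ {e₁, e₂}) v x := by
  have hbase : H.Reachable Set.univ (Set.univ \ {e₂}) u x :=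
    (h2.2.2 e₂).2 u trivial x trivial
  clear hpar
  induction hbase with
  | refl => exact Or.inl Relation.ReflTransGen.refl
  | @tail p q hr hadj ih =>
    obtain ⟨-, -, g, hg, hge⟩ := hadj
    by_cases hg1 : g = e₁
    · subst g
      have hsab : s(u, v) = s(p, q) := huv.symm.trans hge
      rw [Sym2.eq_iff] at hsab
      rcases hsab with ⟨rfl, rfl⟩ | ⟨rfl, rfl⟩
      · exact Or.inr Relation.ReflTransGen.refl
      · exact Or.inl Relation.ReflTransGen.refl
    · have hstep : H.Adj Set.univ (Set.univ \ {e₁, e₂}) p q :=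
        ⟨trivial, trivial, g, ⟨trivial, fun h => by
          rcases Set.mem_insert_iff.mp h with h' | h'
          · exact hg1 h'
          · exact hg.2 h'⟩, hge⟩
      rcases ih with h | h
      · exact Or.inl (Relation.ReflTransGen.tail h hstep)
      · exact Or.inr (Relation.ReflTransGen.tail h hstep)

/-- Step C: a nontrivial component of `H − {e₁, e₂}` is 2-edge-connected. -/
lemma comp_twoEC' (H : CostGraph) (h2 : H.TwoEC Set.univ)
    {e₁ e₂ : H.E} (hpar : H.ends e₁ = H.ends e₂)
    {u v : H.V} (huv : H.ends e₁ = s(u, v))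
    (hA : ¬ H.Reachable Set.univ (Set.univ \ {e₁, e₂}) u v)
    (hcard : 1 < (H.comp' (Set.univ \ {e₁, e₂}) u).ncard) :
    H.TwoECOn (H.comp' (Set.univ \ {e₁, e₂}) u) (Set.univ \ {e₁, e₂}) := by
  set F : Set H.E := Set.univ \ {e₁, e₂} with hFdef
  set D : Set H.V := H.comp' F u with hDdef
  have hcomp := H.comp_isComp' F u
  refine ⟨hcard, hcomp.2.2.1, fun f => ?_⟩
  refine ⟨⟨u, mem_comp_self' F u⟩, ?_⟩
  intro x hx y hy
  by_contra hnr
  by_cases hf : f ∈ F ∧ ∀ z ∈ H.ends f, z ∈ D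
  · -- the interesting case: f is an edge of the component; use 2EC of H
    obtain ⟨hfF, hfD⟩ := hf
    have hu : u ∈ D := mem_comp_self' F u
    have hv : v ∉ D := hA
    have hmax := hcomp.2.2.2
    have hr : H.Reachable Set.univ (Set.univ \ {f}) x y :=
      (h2.2.2 f).2 x trivial y trivial
    have key : ∀ z, H.Reachable Set.univ (Set.univ \ {f}) x z →
        (z ∈ D ∧ H.Reachable D (F \ {f}) x z) ∨
        ((u ∈ D ∧ H.Reachable D (F \ {f}) x u) ∧ z ∉ D) := by
      intro z hz
      induction hz with
      | refl => exact Or.inl ⟨hx, Relation.ReflTransGen.refl⟩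
      | @tail p q hr1 hadj ih =>
        obtain ⟨-, -, g, hg, hge⟩ := hadj
        have hgf : g ≠ f := fun h => hg.2 h
        by_cases hg12 : g = e₁ ∨ g = e₂
        · have hguv : H.ends g = s(u, v) := by
            rcases hg12 with rfl | rfl
            · exact huv
            · rw [← hpar]; exact huv
          have hsab : s(u, v) = s(p, q) := hguv.symm.trans hge
          rw [Sym2.eq_iff] at hsab
          rcases hsab with ⟨rfl, rfl⟩ | ⟨rfl, rfl⟩
          · rcases ih with ⟨_, hru⟩ | ⟨_, hud⟩
            · exact Or.inr ⟨⟨hu, hru⟩, hv⟩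
            · exact absurd hu hud
          · rcases ih with ⟨hpD, _⟩ | ⟨hA', _⟩
            · exact absurd hpD hv
            · exact Or.inl hA'
        · push_neg at hg12
          have hgF : g ∈ F := ⟨trivial, fun h => by
            rcases Set.mem_insert_iff.mp h with h' | h'
            · exact hg12.1 h'
            · exact hg12.2 h'⟩
          rcases ih with ⟨hpD, hrp⟩ | ⟨hA', hpD⟩
          · have hqD : q ∈ D := hmax p hpD q trivial ⟨trivial, trivial, g, hgF, hge⟩
            exact Or.inl ⟨hqD, Relation.ReflTransGen.tail hrp
              ⟨hpD, hqD, g, ⟨hgF, hgf⟩, hge⟩⟩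
          · have hqD : q ∉ D := fun hq => hpD
              (hmax q hq p trivial ⟨trivial, trivial, g, hgF,
                by rw [hge, Sym2.eq_swap]⟩)
            exact Or.inr ⟨hA', hqD⟩
    rcases key y hr with ⟨_, hry⟩ | ⟨_, hyD⟩
    · exact hnr hry
    · exact hyD hy
  · -- f is not an edge of the component: deleting it changes nothing
    apply hnr
    have hxy : H.Reachable D F x y := hcomp.2.2.1.2 x hx y hy
    refine reach_transfer' ?_ hxy
    rintro a b ⟨ha, hb, g, hg, hge⟩
    have hgf : g ≠ f := by
      rintro rfl
      exact hf ⟨hg, fun z hz => by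
        rw [hge] at hz
        rcases Sym2.mem_iff.mp hz with rfl | rfl
        · exact ha
        · exact hb⟩
    exact Relation.ReflTransGen.single ⟨ha, hb, g, ⟨hg, hgf⟩, hge⟩

end CostGraph

end AuxForStatement5

/-- Let `H` be an edge-minimal 2-edge-connected multigraph and
`e₁, e₂` a pair of parallel edges of `H`. Then `H − {e₁, e₂}` has exactly two
connected components, and each of them is a single node or 2-edge-connected. -/
theorem parallel_pair_delete_components (H : CostGraph) (h2 : H.TwoEC Set.univ)
    (hmin : ∀ F : Set H.E, F ≠ Set.univ → ¬ H.TwoEC F)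
    (e₁ e₂ : H.E) (hne : e₁ ≠ e₂) (hpar : H.ends e₁ = H.ends e₂) :
    {C | H.IsCompOf Set.univ (Set.univ \ {e₁, e₂}) C}.ncard = 2 ∧
    ∀ C, H.IsCompOf Set.univ (Set.univ \ {e₁, e₂}) C →
      C.ncard = 1 ∨ H.TwoECOn C (Set.univ \ {e₁, e₂}) := by
  classical
  haveI := H.finV
  obtain ⟨u, v, huv⟩ : ∃ u v, H.ends e₁ = s(u, v) := by
    induction H.ends e₁ using Sym2.ind with
    | _ a b => exact ⟨a, b, rfl⟩
  have hA := CostGraph.not_reach_aux' H h2 hmin hne hpar huv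
  have hA' : ¬ H.Reachable Set.univ (Set.univ \ {e₁, e₂}) v u :=
    fun h => hA (CostGraph.reach_symm' h)
  have huv' : H.ends e₁ = s(v, u) := huv.trans (Sym2.eq_swap)
  set F : Set H.E := Set.univ \ {e₁, e₂} with hFdef
  have hCuCv : H.comp' F u ≠ H.comp' F v := by
    intro h
    exact hA (show v ∈ H.comp' F u by rw [h]; exact CostGraph.mem_comp_self' F v)
  have hset : {C | H.IsCompOf Set.univ F C} =
      {H.comp' F u, H.comp' F v} := by
    ext D
    simp only [Set.mem_setOf_eq, Set.mem_insert_iff, Set.mem_singleton_iff]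
    constructor
    · intro hD
      obtain ⟨z, hz⟩ := hD.2.1
      rcases CostGraph.reach_u_or_v' H h2 hpar huv z with h | h
      · exact Or.inl ((CostGraph.isCompOf_eq_comp' hD hz).trans
          (CostGraph.comp_congr' h).symm)
      · exact Or.inr ((CostGraph.isCompOf_eq_comp' hD hz).trans
          (CostGraph.comp_congr' h).symm)
    · rintro (rfl | rfl)
      · exact CostGraph.comp_isComp' F u
      · exact CostGraph.comp_isComp' F v
  constructor
  · rw [hset]
    exact Set.ncard_pair hCuCv
  · intro C hC
    by_cases h1 : C.ncard = 1
    · exact Or.inl h1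
    · right
      have hCm : C ∈ ({H.comp' F u, H.comp' F v} : Set (Set H.V)) := by
        rw [← hset]; exact hC
      have hpos : 0 < C.ncard := by
        rw [Set.ncard_pos]; exact hC.2.1
      have hcard : 1 < C.ncard := by omega
      rcases hCm with rfl | rfl
      · exact CostGraph.comp_twoEC' H h2 hpar huv hA hcard
      · exact CostGraph.comp_twoEC' H h2 hpar huv' hA' hcard
end

section
/- Let G be a MAP instance with no {0,1}-edge-pairs that has exactly q redundant 4-cycles, and let Ĝ be the multigraph obtained from G by contracting all redundant 4-cycles. Then opt(G) = opt(Ĝ) + 2q. -/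
set_option autoImplicit false

namespace CostGraph
variable {G : CostGraph}

lemma adj_symm {S F} {x y : G.V} (h : G.Adj S F x y) : G.Adj S F y x := by
  obtain ⟨hx, hy, e, he, hee⟩ := h
  exact ⟨hy, hx, e, he, by rw [hee, Sym2.eq_swap]⟩

lemma reach_mono {S} {F F' : Set G.E} (hFF : F ⊆ F') {x y : G.V}
    (h : G.Reachable S F x y) : G.Reachable S F' x y := by
  refine Relation.ReflTransGen.mono ?_ _ _ h
  rintro a b ⟨ha, hb, e, he, hee⟩
  exact ⟨ha, hb, e, hFF he, hee⟩

lemma reach_symm {S F} {x y : G.V} (h : G.Reachable S F x y) : G.Reachable S F y x := by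
  induction h with
  | refl => exact Relation.ReflTransGen.refl
  | tail _ hadj ih => exact Relation.ReflTransGen.head (adj_symm hadj) ih

lemma reach_of_adj {S F} {x y : G.V} (h : G.Adj S F x y) : G.Reachable S F x y :=
  Relation.ReflTransGen.single h

lemma zero_unique (hzm : G.ZeroMatching) {e f : G.E} (he : G.isZero e) (hf : G.isZero f)
    {x : G.V} (hxe : x ∈ G.ends e) (hxf : x ∈ G.ends f) : e = f := by
  by_contra hne
  exact hzm e f he hf hne x hxe hxf

lemma deg2_edges {v : G.V} (hv : G.degree v = 2) {g₁ g₂ : G.E} (h12 : g₁ ≠ g₂)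
    (h1 : v ∈ G.ends g₁) (h2 : v ∈ G.ends g₂) {f : G.E} (hf : v ∈ G.ends f) :
    f = g₁ ∨ f = g₂ := by
  haveI := G.finE
  have hA : ({g₁, g₂} : Set G.E) = {e : G.E | v ∈ G.ends e} := by
    have hv' : {e : G.E | v ∈ G.ends e}.ncard = 2 := hv
    apply Set.eq_of_subset_of_ncard_le
    · rintro e (rfl | rfl) <;> simpa
    · rw [hv']; exact (Set.ncard_pair h12).ge
    · exact Set.toFinite _
  have : f ∈ ({g₁, g₂} : Set G.E) := hA ▸ hf
  simpa using this

/-- A witness for a redundant 4-cycle. -/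
structure R4W (G : CostGraph) (Q : Set G.V) where
  u₁ : G.V
  u₂ : G.V
  u₃ : G.V
  u₄ : G.V
  e₁ : G.E
  e₂ : G.E
  e₃ : G.E
  e₄ : G.E
  hQ : Q = {u₁, u₂, u₃, u₄}
  h12 : u₁ ≠ u₂
  h13 : u₁ ≠ u₃
  h14 : u₁ ≠ u₄
  h23 : u₂ ≠ u₃
  h24 : u₂ ≠ u₄
  h34 : u₃ ≠ u₄
  f12 : e₁ ≠ e₂
  f13 : e₁ ≠ e₃
  f14 : e₁ ≠ e₄
  f23 : e₂ ≠ e₃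
  f24 : e₂ ≠ e₄
  f34 : e₃ ≠ e₄
  g1 : G.ends e₁ = s(u₁, u₂)
  g2 : G.ends e₂ = s(u₂, u₃)
  g3 : G.ends e₃ = s(u₃, u₄)
  g4 : G.ends e₄ = s(u₄, u₁)
  z1 : G.isZero e₁
  z3 : G.isZero e₃
  d2 : G.degree u₂ = 2
  d4 : G.degree u₄ = 2
  hne : Q ≠ Set.univ

noncomputable def r4w {Q : Set G.V} (h : G.IsRed4CycleOn Q) : R4W G Q := by
  choose u₁ u₂ u₃ u₄ e₁ e₂ e₃ e₄ h using h
  refine ⟨u₁, u₂, u₃, u₄, e₁, e₂, e₃, e₄, ?_, ?_, ?_, ?_, ?_, ?_, ?_, ?_, ?_, ?_, ?_, ?_,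
    ?_, ?_, ?_, ?_, ?_, ?_, ?_, ?_, ?_, ?_⟩ <;> tauto

/-- Rotation by two of a witness. -/
def R4W.rot {Q : Set G.V} (w : R4W G Q) : R4W G Q where
  u₁ := w.u₃; u₂ := w.u₄; u₃ := w.u₁; u₄ := w.u₂
  e₁ := w.e₃; e₂ := w.e₄; e₃ := w.e₁; e₄ := w.e₂
  hQ := w.hQ.trans (by ext x; simp; tauto)
  h12 := w.h34
  h13 := w.h13.symm
  h14 := w.h23.symm
  h23 := w.h14.symm
  h24 := w.h24.symm
  h34 := w.h12
  f12 := w.f34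
  f13 := w.f13.symm
  f14 := w.f23.symm
  f23 := w.f14.symm
  f24 := w.f24.symm
  f34 := w.f12
  g1 := w.g3
  g2 := w.g4
  g3 := w.g1
  g4 := w.g2
  z1 := w.z3
  z3 := w.z1
  d2 := w.d4
  d4 := w.d2
  hne := w.hne

lemma R4W.mem_u₁ {Q : Set G.V} (w : R4W G Q) : w.u₁ ∈ Q := by
  have h : w.u₁ ∈ ({w.u₁, w.u₂, w.u₃, w.u₄} : Set G.V) := by simp
  rwa [← w.hQ] at h
lemma R4W.mem_u₂ {Q : Set G.V} (w : R4W G Q) : w.u₂ ∈ Q := by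
  have h : w.u₂ ∈ ({w.u₁, w.u₂, w.u₃, w.u₄} : Set G.V) := by simp
  rwa [← w.hQ] at h
lemma R4W.mem_u₃ {Q : Set G.V} (w : R4W G Q) : w.u₃ ∈ Q := by
  have h : w.u₃ ∈ ({w.u₁, w.u₂, w.u₃, w.u₄} : Set G.V) := by simp
  rwa [← w.hQ] at h
lemma R4W.mem_u₄ {Q : Set G.V} (w : R4W G Q) : w.u₄ ∈ Q := by
  have h : w.u₄ ∈ ({w.u₁, w.u₂, w.u₃, w.u₄} : Set G.V) := by simp
  rwa [← w.hQ] at h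

end CostGraph

namespace CostGraph
variable {G : CostGraph}

lemma mem_low {Q : Set G.V} (w : R4W G Q) {x : G.V} (hx : x ∈ Q) :
    ∃ w' : R4W G Q, x = w'.u₁ ∨ x = w'.u₂ := by
  have hx' : x ∈ ({w.u₁, w.u₂, w.u₃, w.u₄} : Set G.V) := by rwa [← w.hQ]
  simp only [Set.mem_insert_iff, Set.mem_singleton_iff] at hx'
  rcases hx' with h | h | h | h
  · exact ⟨w, Or.inl h⟩
  · exact ⟨w, Or.inr h⟩
  · exact ⟨w.rot, Or.inl h⟩
  · exact ⟨w.rot, Or.inr h⟩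

lemma red4_disjoint (hzm : G.ZeroMatching) {Q Q' : Set G.V}
    (hQ : G.IsRed4CycleOn Q) (hQ' : G.IsRed4CycleOn Q') {x : G.V}
    (hx : x ∈ Q) (hx' : x ∈ Q') : Q = Q' := by
  obtain ⟨w, hw⟩ := mem_low (r4w hQ) hx
  obtain ⟨w', hw'⟩ := mem_low (r4w hQ') hx'
  have hxe : x ∈ G.ends w.e₁ := by rw [w.g1, Sym2.mem_iff]; tauto
  have hxf : x ∈ G.ends w'.e₁ := by rw [w'.g1, Sym2.mem_iff]; tauto
  have hef : w.e₁ = w'.e₁ := zero_unique hzm w.z1 w'.z1 hxe hxf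
  have hs : s(w.u₁, w.u₂) = s(w'.u₁, w'.u₂) := by rw [← w.g1, hef, w'.g1]
  rw [Sym2.eq_iff] at hs
  have hu2e1 : w.u₂ ∈ G.ends w.e₁ := by rw [w.g1, Sym2.mem_iff]; tauto
  have hu2e2 : w.u₂ ∈ G.ends w.e₂ := by rw [w.g2, Sym2.mem_iff]; tauto
  rcases hs with ⟨h11, h22⟩ | ⟨h12, h21⟩
  · -- u₁ = v₁, u₂ = v₂
    have hv2f2 : w.u₂ ∈ G.ends w'.e₂ := by rw [w'.g2, Sym2.mem_iff]; left; exact h22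
    rcases deg2_edges w.d2 w.f12 hu2e1 hu2e2 hv2f2 with h | h
    · exact absurd (h.trans hef).symm w'.f12
    · have hs2 : s(w'.u₂, w'.u₃) = s(w.u₂, w.u₃) := by rw [← w'.g2, h, w.g2]
      rw [Sym2.eq_iff] at hs2
      rcases hs2 with ⟨hb1, hb2⟩ | ⟨hb1, hb2⟩
      · have hu3e3 : w.u₃ ∈ G.ends w.e₃ := by rw [w.g3, Sym2.mem_iff]; tauto
        have hu3f3 : w.u₃ ∈ G.ends w'.e₃ := by
          rw [w'.g3, Sym2.mem_iff]; left; exact hb2.symm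
        have he3 : w.e₃ = w'.e₃ := zero_unique hzm w.z3 w'.z3 hu3e3 hu3f3
        have hs3 : s(w.u₃, w.u₄) = s(w'.u₃, w'.u₄) := by rw [← w.g3, he3, w'.g3]
        rw [Sym2.eq_iff] at hs3
        rcases hs3 with ⟨hc1, hc2⟩ | ⟨hc1, hc2⟩
        · rw [w.hQ, w'.hQ, h11, h22, hc1, hc2]
        · exact absurd (hc2.trans hb2) w.h34.symm
      · exact absurd (h22.trans hb1) w.h23
  · -- u₁ = v₂, u₂ = v₁
    have hv1f4 : w.u₂ ∈ G.ends w'.e₄ := by rw [w'.g4, Sym2.mem_iff]; right; exact h21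
    have hne14 : w'.e₄ ≠ w.e₁ := by rw [hef]; exact w'.f14.symm
    rcases deg2_edges w.d2 w.f12 hu2e1 hu2e2 hv1f4 with h | h
    · exact absurd h hne14
    · have hs2 : s(w'.u₄, w'.u₁) = s(w.u₂, w.u₃) := by rw [← w'.g4, h, w.g2]
      rw [Sym2.eq_iff] at hs2
      rcases hs2 with ⟨hb1, hb2⟩ | ⟨hb1, hb2⟩
      · exact absurd (h21.trans hb2) w.h23
      · -- v₄ = u₃
        have hv2f1 : w.u₁ ∈ G.ends w'.e₁ := by rw [w'.g1, Sym2.mem_iff]; right; exact h12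
        have hv2f2 : w.u₁ ∈ G.ends w'.e₂ := by rw [w'.g2, Sym2.mem_iff]; left; exact h12
        have hu1e4 : w.u₁ ∈ G.ends w.e₄ := by rw [w.g4, Sym2.mem_iff]; tauto
        rw [h12] at hv2f1 hv2f2 hu1e4
        rcases deg2_edges w'.d2 w'.f12 hv2f1 hv2f2 hu1e4 with h' | h'
        · exact absurd (h'.trans hef.symm).symm w.f14
        · have hs3 : s(w.u₄, w.u₁) = s(w'.u₂, w'.u₃) := by rw [← w.g4, h', w'.g2]
          rw [Sym2.eq_iff] at hs3
          rcases hs3 with ⟨hc1, hc2⟩ | ⟨hc1, hc2⟩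
          · exact absurd (hc1.trans h12.symm) w.h14.symm
          · rw [w.hQ, w'.hQ, h12, h21, hc1, ← hb1]
            ext y
            simp only [Set.mem_insert_iff, Set.mem_singleton_iff]
            tauto

lemma red4Rel_symm {a b : G.V} (h : G.red4Rel a b) : G.red4Rel b a := by
  obtain ⟨Q, hQ, ha, hb⟩ := h; exact ⟨Q, hQ, hb, ha⟩

lemma eqvGen_red4 (hzm : G.ZeroMatching) {a b : G.V} :
    Relation.EqvGen G.red4Rel a b ↔ a = b ∨ G.red4Rel a b := by
  constructor
  · intro h
    induction h with
    | rel x y h => exact Or.inr h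
    | refl x => exact Or.inl rfl
    | symm x y h ih => rcases ih with rfl | h' ; exacts [Or.inl rfl, Or.inr (red4Rel_symm h')]
    | trans x y z h1 h2 ih1 ih2 =>
      rcases ih1 with rfl | ⟨Q, hQ, hx, hy⟩
      · exact ih2
      rcases ih2 with rfl | ⟨Q', hQ', hy', hz⟩
      · exact Or.inr ⟨Q, hQ, hx, hy⟩
      · exact Or.inr ⟨Q, hQ, hx, (red4_disjoint hzm hQ hQ' hy hy') ▸ hz⟩
  · rintro (rfl | h)
    · exact Relation.EqvGen.refl a
    · exact Relation.EqvGen.rel a b h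

lemma mk_eq_iff (hzm : G.ZeroMatching) {a b : G.V} :
    Quotient.mk (Relation.EqvGen.setoid G.red4Rel) a
      = Quotient.mk (Relation.EqvGen.setoid G.red4Rel) b ↔ a = b ∨ G.red4Rel a b := by
  rw [← eqvGen_red4 hzm]
  exact ⟨fun h => Quotient.exact h, fun h => Quotient.sound h⟩

end CostGraph

namespace CostGraph
variable {G : CostGraph}

lemma exists_pair {α : Type} (z : Sym2 α) : ∃ a b, z = s(a, b) :=
  Sym2.ind (fun a b => ⟨a, b, rfl⟩) z

lemma path3 {a b c d : G.V} {p q r : G.E} {A : Set G.E}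
    (hp : p ∈ A) (hq : q ∈ A) (hr : r ∈ A)
    (h1 : G.ends p = s(a, b)) (h2 : G.ends q = s(b, c)) (h3 : G.ends r = s(c, d)) :
    ∀ z, z = a ∨ z = b ∨ z = c ∨ z = d → G.Reachable Set.univ A a z := by
  have rab : G.Reachable Set.univ A a b :=
    reach_of_adj ⟨Set.mem_univ _, Set.mem_univ _, p, hp, h1⟩
  have rbc : G.Reachable Set.univ A b c :=
    reach_of_adj ⟨Set.mem_univ _, Set.mem_univ _, q, hq, h2⟩
  have rcd : G.Reachable Set.univ A c d :=
    reach_of_adj ⟨Set.mem_univ _, Set.mem_univ _, r, hr, h3⟩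
  rintro z (rfl | rfl | rfl | rfl)
  · exact .refl
  · exact rab
  · exact rab.trans rbc
  · exact (rab.trans rbc).trans rcd

lemma cyc_conn {Q : Set G.V} (w : R4W G Q) (e₀ : G.E) {x y : G.V}
    (hx : x ∈ Q) (hy : y ∈ Q) :
    G.Reachable Set.univ (({w.e₁, w.e₂, w.e₃, w.e₄} : Set G.E) \ {e₀}) x y := by
  set A : Set G.E := ({w.e₁, w.e₂, w.e₃, w.e₄} : Set G.E) \ {e₀} with hA
  have memQ : ∀ z, z ∈ Q → z = w.u₁ ∨ z = w.u₂ ∨ z = w.u₃ ∨ z = w.u₄ := by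
    intro z hz
    rw [w.hQ] at hz
    simpa using hz
  have main : ∃ h : G.V, h ∈ Q ∧ ∀ z ∈ Q, G.Reachable Set.univ A h z := by
    by_cases h1 : e₀ = w.e₁
    · refine ⟨w.u₂, w.mem_u₂, fun z hz => ?_⟩
      refine path3 (p := w.e₂) (q := w.e₃) (r := w.e₄) ?_ ?_ ?_ w.g2 w.g3 w.g4 z ?_
      · exact ⟨by simp, fun hh => w.f12 ((Set.mem_singleton_iff.mp hh).trans h1).symm⟩
      · exact ⟨by simp, fun hh => w.f13 ((Set.mem_singleton_iff.mp hh).trans h1).symm⟩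
      · exact ⟨by simp, fun hh => w.f14 ((Set.mem_singleton_iff.mp hh).trans h1).symm⟩
      · have := memQ z hz; tauto
    · by_cases h2 : e₀ = w.e₂
      · refine ⟨w.u₃, w.mem_u₃, fun z hz => ?_⟩
        refine path3 (p := w.e₃) (q := w.e₄) (r := w.e₁)
          ?_ ?_ ?_ w.g3 w.g4 w.g1 z ?_
        · exact ⟨by simp, fun hh => w.f23 ((Set.mem_singleton_iff.mp hh).trans h2).symm⟩
        · exact ⟨by simp, fun hh => w.f24 ((Set.mem_singleton_iff.mp hh).trans h2).symm⟩
        · exact ⟨by simp, fun hh => w.f12 ((Set.mem_singleton_iff.mp hh).trans h2)⟩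
        · have := memQ z hz; tauto
      · by_cases h3 : e₀ = w.e₃
        · refine ⟨w.u₄, w.mem_u₄, fun z hz => ?_⟩
          refine path3 (p := w.e₄) (q := w.e₁) (r := w.e₂)
            ?_ ?_ ?_ w.g4 w.g1 w.g2 z ?_
          · exact ⟨by simp, fun hh => w.f34 ((Set.mem_singleton_iff.mp hh).trans h3).symm⟩
          · exact ⟨by simp, fun hh => w.f13 ((Set.mem_singleton_iff.mp hh).trans h3)⟩
          · exact ⟨by simp, fun hh => w.f23 ((Set.mem_singleton_iff.mp hh).trans h3)⟩
          · have := memQ z hz; tauto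
        · refine ⟨w.u₁, w.mem_u₁, fun z hz => ?_⟩
          refine path3 (p := w.e₁) (q := w.e₂) (r := w.e₃)
            ?_ ?_ ?_ w.g1 w.g2 w.g3 z ?_
          · exact ⟨by simp, fun hh => h1 (Set.mem_singleton_iff.mp hh).symm⟩
          · exact ⟨by simp, fun hh => h2 (Set.mem_singleton_iff.mp hh).symm⟩
          · exact ⟨by simp, fun hh => h3 (Set.mem_singleton_iff.mp hh).symm⟩
          · exact memQ z hz
  obtain ⟨h, hh, hr⟩ := main
  exact (reach_symm (hr x hx)).trans (hr y hy)

lemma contract_ends (f : G.contractRed4.E) :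
    G.contractRed4.ends f
      = Sym2.map (Quotient.mk (Relation.EqvGen.setoid G.red4Rel)) (G.ends f.1) := rfl

lemma push_reach {F : Set G.E} {x y : G.V} (h : G.Reachable Set.univ F x y) :
    G.contractRed4.Reachable Set.univ {f : G.contractRed4.E | f.1 ∈ F}
      (Quotient.mk (Relation.EqvGen.setoid G.red4Rel) x)
      (Quotient.mk (Relation.EqvGen.setoid G.red4Rel) y) := by
  induction h with
  | refl => exact .refl
  | tail hr hadj ih =>
    obtain ⟨-, -, g, hgF, hge⟩ := hadj
    by_cases hd : (Sym2.map (Quotient.mk (Relation.EqvGen.setoid G.red4Rel)) (G.ends g)).IsDiag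
    · rw [hge] at hd
      simp only [Sym2.map_pair_eq, Sym2.mk_isDiag_iff] at hd
      rw [← hd]
      exact ih
    · refine ih.tail ⟨Set.mem_univ _, Set.mem_univ _, ⟨g, hd⟩, hgF, ?_⟩
      show Sym2.map (Quotient.mk (Relation.EqvGen.setoid G.red4Rel)) (G.ends g) = _
      rw [hge]
      exact Sym2.map_pair_eq _ _ _

lemma lift_reach (hzm : G.ZeroMatching) {B : Set G.contractRed4.E} {FA : Set G.E}
    (hBF : ∀ f ∈ B, f.1 ∈ FA)
    (hcls : ∀ a b : G.V,
      Quotient.mk (Relation.EqvGen.setoid G.red4Rel) a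
        = Quotient.mk (Relation.EqvGen.setoid G.red4Rel) b →
      G.Reachable Set.univ FA a b)
    {ξ υ : G.contractRed4.V} (h : G.contractRed4.Reachable Set.univ B ξ υ) :
    ∀ x y : G.V, Quotient.mk (Relation.EqvGen.setoid G.red4Rel) x = ξ →
      Quotient.mk (Relation.EqvGen.setoid G.red4Rel) y = υ →
      G.Reachable Set.univ FA x y := by
  induction h with
  | refl => intro x y hx hy; exact hcls x y (hx.trans hy.symm)
  | @tail b c hr hadj ih =>
    intro x y hx hy
    obtain ⟨-, -, f, hfB, hfe⟩ := hadj
    obtain ⟨a', b', hab⟩ := exists_pair (G.ends f.1)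
    rw [contract_ends, hab, Sym2.map_pair_eq] at hfe
    replace hfe := Sym2.eq_iff.mp hfe
    rcases hfe with ⟨ha, hb⟩ | ⟨ha, hb⟩
    · refine (ih x a' hx ha).trans ?_
      refine Relation.ReflTransGen.head ⟨Set.mem_univ _, Set.mem_univ _, f.1, hBF f hfB, hab⟩ ?_
      exact hcls b' y (hb.trans (hy.symm))
    · refine (ih x b' hx hb).trans ?_
      refine Relation.ReflTransGen.head
        ⟨Set.mem_univ _, Set.mem_univ _, f.1, hBF f hfB, by rw [hab, Sym2.eq_swap]⟩ ?_
      exact hcls a' y (ha.trans (hy.symm))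

end CostGraph

namespace CostGraph
variable {G : CostGraph}

lemma twoEC_deg2_mem {F : Set G.E} (hF : G.TwoEC F) {v : G.V} {g₁ g₂ : G.E}
    (hv : G.degree v = 2) (hne : g₁ ≠ g₂) (h1 : v ∈ G.ends g₁) (h2 : v ∈ G.ends g₂) :
    g₁ ∈ F ∧ g₂ ∈ F := by
  obtain ⟨hcard, hconn, hdel⟩ := hF
  haveI := G.finV
  obtain ⟨a, b, -, -, hab⟩ := (Set.one_lt_ncard_iff (Set.toFinite _)).mp hcard
  have hw : ∃ w : G.V, w ≠ v := by
    by_cases ha : a = v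
    · exact ⟨b, fun hh => hab (hh.trans ha.symm).symm⟩
    · exact ⟨a, ha⟩
  obtain ⟨w, hwv⟩ := hw
  -- first incident edge in F
  have hr1 : G.Reachable Set.univ F v w := hconn.2 v trivial w trivial
  rcases hr1.cases_head with rfl | ⟨c, hadj, -⟩
  · exact absurd rfl hwv.symm
  obtain ⟨-, -, p, hpF, hpe⟩ := hadj
  have hvp : v ∈ G.ends p := by rw [hpe]; simp
  -- second incident edge in F \ {p}
  have hr2 : G.Reachable Set.univ (F \ {p}) v w := (hdel p).2 v trivial w trivial
  rcases hr2.cases_head with rfl | ⟨c', hadj', -⟩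
  · exact absurd rfl hwv.symm
  obtain ⟨-, -, r, hrF, hre⟩ := hadj'
  have hvr : v ∈ G.ends r := by rw [hre]; simp
  have hrp : r ≠ p := fun hh => hrF.2 (by simpa using hh)
  rcases deg2_edges hv hne h1 h2 hvp with hp1 | hp2
  · rcases deg2_edges hv hne h1 h2 hvr with hr1' | hr2'
    · exact absurd (hr1'.trans hp1.symm) hrp
    · exact ⟨hp1 ▸ hpF, hr2' ▸ hrF.1⟩
  · rcases deg2_edges hv hne h1 h2 hvr with hr1' | hr2'
    · exact ⟨hr1' ▸ hrF.1, hp2 ▸ hpF⟩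
    · exact absurd (hr2'.trans hp2.symm) hrp

lemma pair_union_count {α β : Type} [Finite β] {S : Set α} (hS : S.Finite) (f g : α → β)
    (hfg : ∀ a ∈ S, f a ≠ g a)
    (hdisj : ∀ a ∈ S, ∀ b ∈ S, a ≠ b → (({f a, g a} : Set β) ∩ {f b, g b}) = ∅) :
    (⋃ a ∈ S, ({f a, g a} : Set β)).ncard = 2 * S.ncard := by
  have key : ∀ s : Set α, s.Finite → s ⊆ S →
      (⋃ a ∈ s, ({f a, g a} : Set β)).ncard = 2 * s.ncard := by
    intro s hs
    refine Set.Finite.induction_on s hs (fun _ => by simp) ?_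
    intro a t hat htf ih hsub
    have haS : a ∈ S := hsub (Set.mem_insert _ _)
    have hdisj' : Disjoint ({f a, g a} : Set β) (⋃ b ∈ t, ({f b, g b} : Set β)) := by
      rw [Set.disjoint_left]
      intro x hx hx'
      obtain ⟨b, hb, hxb⟩ := Set.mem_iUnion₂.mp hx'
      have hne : a ≠ b := fun hh => hat (hh ▸ hb)
      have := hdisj a haS b (hsub (Set.mem_insert_of_mem _ hb)) hne
      exact absurd (Set.mem_inter hx hxb) (by rw [this]; exact not_false_iff.mpr trivial)
    rw [Set.biUnion_insert, Set.ncard_union_eq hdisj' (Set.toFinite _) (Set.toFinite _),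
      ih (fun z hz => hsub (Set.mem_insert_of_mem _ hz)),
      Set.ncard_insert_of_notMem hat htf, Set.ncard_pair (hfg a haS)]
    ring
  exact key S hS subset_rfl

end CostGraph

namespace CostGraph
variable {G : CostGraph}

noncomputable def E4set {Q : Set G.V} (h : G.IsRed4CycleOn Q) : Set G.E :=
  {(r4w h).e₁, (r4w h).e₂, (r4w h).e₃, (r4w h).e₄}

noncomputable def cycAll (G : CostGraph) : Set G.E :=
  ⋃ Q, ⋃ (h : G.IsRed4CycleOn Q), E4set h

lemma mem_cycAll {Q : Set G.V} (h : G.IsRed4CycleOn Q) {e : G.E} (he : e ∈ E4set h) :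
    e ∈ G.cycAll := Set.mem_iUnion.mpr ⟨Q, Set.mem_iUnion.mpr ⟨h, he⟩⟩

lemma E4_ends {Q : Set G.V} (h : G.IsRed4CycleOn Q) {e : G.E} (he : e ∈ E4set h) :
    ∀ x ∈ G.ends e, x ∈ Q := by
  intro x hx
  rcases he with rfl | rfl | rfl | rfl
  · rw [(r4w h).g1] at hx
    rcases Sym2.mem_iff.mp hx with rfl | rfl
    exacts [(r4w h).mem_u₁, (r4w h).mem_u₂]
  · rw [(r4w h).g2] at hx
    rcases Sym2.mem_iff.mp hx with rfl | rfl
    exacts [(r4w h).mem_u₂, (r4w h).mem_u₃]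
  · rw [(r4w h).g3] at hx
    rcases Sym2.mem_iff.mp hx with rfl | rfl
    exacts [(r4w h).mem_u₃, (r4w h).mem_u₄]
  · rw [(r4w h).g4] at hx
    rcases Sym2.mem_iff.mp hx with rfl | rfl
    exacts [(r4w h).mem_u₄, (r4w h).mem_u₁]

lemma E4_diag (hzm : G.ZeroMatching) {Q : Set G.V} (h4 : G.IsRed4CycleOn Q) {e : G.E}
    (he : e ∈ E4set h4) :
    (Sym2.map (Quotient.mk (Relation.EqvGen.setoid G.red4Rel)) (G.ends e)).IsDiag := by
  obtain ⟨a, b, hab⟩ := exists_pair (G.ends e)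
  have ha : a ∈ Q := E4_ends h4 he a (by rw [hab]; simp)
  have hb : b ∈ Q := E4_ends h4 he b (by rw [hab]; simp)
  rw [hab, Sym2.map_pair_eq, Sym2.mk_isDiag_iff]
  exact (mk_eq_iff hzm).mpr (Or.inr ⟨Q, h4, ha, hb⟩)

lemma part1 (hzm : G.ZeroMatching) {F : Set G.E} (hF : G.TwoEC F) :
    G.contractRed4.TwoEC {f : G.contractRed4.E | f.1 ∈ F} ∧
      G.contractRed4.cost {f : G.contractRed4.E | f.1 ∈ F}
        + 2 * {Q | G.IsRed4CycleOn Q}.ncard ≤ G.cost F := by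
  haveI := G.finV
  haveI := G.finE
  haveI := G.contractRed4.finV
  haveI := G.contractRed4.finE
  have hVne : Nonempty G.V := by
    have := hF.1
    have h0 : (Set.univ : Set G.V).Nonempty := Set.nonempty_of_ncard_ne_zero (by omega)
    exact ⟨h0.choose⟩
  haveI : Nonempty G.contractRed4.V :=
    ⟨Quotient.mk (Relation.EqvGen.setoid G.red4Rel) hVne.some⟩
  constructor
  · refine ⟨?_, ?_, ?_⟩
    · -- at least two classes
      have hxy : ∃ x y : G.V,
          Quotient.mk (Relation.EqvGen.setoid G.red4Rel) x
            ≠ Quotient.mk (Relation.EqvGen.setoid G.red4Rel) y := by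
        by_cases hq : ∃ Q, G.IsRed4CycleOn Q
        · obtain ⟨Q, hQ4⟩ := hq
          obtain ⟨z, hz⟩ := (Set.ne_univ_iff_exists_notMem Q).mp (r4w hQ4).hne
          refine ⟨(r4w hQ4).u₁, z, fun hh => ?_⟩
          rcases (mk_eq_iff hzm).mp hh with rfl | ⟨Q', h', h1, h2⟩
          · exact hz (r4w hQ4).mem_u₁
          · exact hz (red4_disjoint hzm h' hQ4 h1 (r4w hQ4).mem_u₁ ▸ h2)
        · obtain ⟨x, y, -, -, hxy⟩ := (Set.one_lt_ncard_iff (Set.toFinite _)).mp hF.1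
          refine ⟨x, y, fun hh => ?_⟩
          rcases (mk_eq_iff hzm).mp hh with rfl | ⟨Q, h4, -, -⟩
          · exact hxy rfl
          · exact hq ⟨Q, h4⟩
      obtain ⟨x, y, hxy⟩ := hxy
      exact (Set.one_lt_ncard_iff (Set.toFinite _)).mpr ⟨_, _, trivial, trivial, hxy⟩
    · -- connectivity
      refine ⟨Set.univ_nonempty, fun ξ _ υ _ => ?_⟩
      obtain ⟨x, rfl⟩ := Quotient.exists_rep ξ
      obtain ⟨y, rfl⟩ := Quotient.exists_rep υ
      exact push_reach (hF.2.1.2 x trivial y trivial)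
    · -- 2EC
      intro eh
      refine ⟨Set.univ_nonempty, fun ξ _ υ _ => ?_⟩
      obtain ⟨x, rfl⟩ := Quotient.exists_rep ξ
      obtain ⟨y, rfl⟩ := Quotient.exists_rep υ
      have h1 := push_reach ((hF.2.2 eh.1).2 x trivial y trivial)
      refine reach_mono ?_ h1
      rintro f ⟨hf1, hf2⟩
      refine ⟨hf1, fun hh => ?_⟩
      simp only [Set.mem_singleton_iff] at hh
      exact hf2 (by rw [hh]; exact rfl)
  · -- cost
    set T := {e ∈ F | ¬ G.isZero e} with hT
    set U := Subtype.val '' {f : G.contractRed4.E | f.1 ∈ F ∧ ¬ G.isZero f.1} with hUdef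
    have hUcard : G.contractRed4.cost {f : G.contractRed4.E | f.1 ∈ F} = U.ncard := by
      rw [hUdef, Set.ncard_image_of_injective _ Subtype.val_injective]
      rfl
    have hUT : U ⊆ T := by
      rintro u ⟨f, ⟨hf1, hf2⟩, rfl⟩
      exact ⟨hf1, hf2⟩
    by_cases hS : {Q | G.IsRed4CycleOn Q} = ∅
    · rw [hS]
      simp only [Set.ncard_empty, Nat.mul_zero, Nat.add_zero]
      rw [hUcard]
      exact Set.ncard_le_ncard hUT (Set.toFinite _)
    · obtain ⟨Q₀, hQ₀⟩ := Set.nonempty_iff_ne_empty.mpr hS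
      haveI : Nonempty G.E := ⟨(r4w hQ₀).e₁⟩
      classical
      set f2 : Set G.V → G.E :=
        fun Q => if h : G.IsRed4CycleOn Q then (r4w h).e₂ else Classical.arbitrary _ with hf2def
      set f4 : Set G.V → G.E :=
        fun Q => if h : G.IsRed4CycleOn Q then (r4w h).e₄ else Classical.arbitrary _ with hf4def
      have hf2val : ∀ {Q} (h : G.IsRed4CycleOn Q), f2 Q = (r4w h).e₂ := by
        intro Q h; rw [hf2def]; simp [h]
      have hf4val : ∀ {Q} (h : G.IsRed4CycleOn Q), f4 Q = (r4w h).e₄ := by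
        intro Q h; rw [hf4def]; simp [h]
      set D := ⋃ Q ∈ {Q | G.IsRed4CycleOn Q}, ({f2 Q, f4 Q} : Set G.E) with hDdef
      have hpair_sub : ∀ {Q} (h : G.IsRed4CycleOn Q),
          ({f2 Q, f4 Q} : Set G.E) ⊆ E4set h := by
        intro Q h e he
        rcases he with rfl | rfl
        · rw [hf2val h]; right; left; rfl
        · rw [hf4val h]; right; right; right; rfl
      have hDcard : D.ncard = 2 * {Q | G.IsRed4CycleOn Q}.ncard := by
        refine pair_union_count (Set.toFinite _) f2 f4 ?_ ?_
        · intro Q hQ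
          rw [hf2val hQ, hf4val hQ]
          exact (r4w hQ).f24
        · intro Q hQ Q' hQ' hne
          by_contra hne'
          obtain ⟨e, he1, he2⟩ := Set.nonempty_iff_ne_empty.mpr hne'
          obtain ⟨a, b, hab⟩ := exists_pair (G.ends e)
          have ha : a ∈ Q := E4_ends hQ (hpair_sub hQ he1) a (by rw [hab]; simp)
          have ha' : a ∈ Q' := E4_ends hQ' (hpair_sub hQ' he2) a (by rw [hab]; simp)
          exact hne (red4_disjoint hzm hQ hQ' ha ha')
      have hDT : D ⊆ T := by
        intro e he
        obtain ⟨Q, hQ, heQ⟩ := Set.mem_iUnion₂.mp he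
        set w := r4w hQ with hw
        have hu2e1 : w.u₂ ∈ G.ends w.e₁ := by rw [w.g1, Sym2.mem_iff]; tauto
        have hu2e2 : w.u₂ ∈ G.ends w.e₂ := by rw [w.g2, Sym2.mem_iff]; tauto
        have hu4e3 : w.u₄ ∈ G.ends w.e₃ := by rw [w.g3, Sym2.mem_iff]; tauto
        have hu4e4 : w.u₄ ∈ G.ends w.e₄ := by rw [w.g4, Sym2.mem_iff]; tauto
        rcases heQ with rfl | rfl
        · rw [hf2val hQ]
          refine ⟨(twoEC_deg2_mem hF w.d2 w.f12 hu2e1 hu2e2).2, fun hz => ?_⟩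
          exact w.f12 (zero_unique hzm w.z1 hz hu2e1 hu2e2)
        · rw [hf4val hQ]
          refine ⟨(twoEC_deg2_mem hF w.d4 w.f34 hu4e3 hu4e4).2, fun hz => ?_⟩
          exact w.f34 (zero_unique hzm w.z3 hz hu4e3 hu4e4)
      have hUD : Disjoint U D := by
        rw [Set.disjoint_left]
        rintro e ⟨f, -, rfl⟩ heD
        obtain ⟨Q, hQ, heQ⟩ := Set.mem_iUnion₂.mp heD
        exact f.2 (E4_diag hzm hQ (hpair_sub hQ heQ))
      have hsub : U ∪ D ⊆ T := Set.union_subset hUT hDT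
      have := Set.ncard_le_ncard hsub (Set.toFinite _)
      rw [Set.ncard_union_eq hUD (Set.toFinite _) (Set.toFinite _), hDcard] at this
      rw [hUcard]
      exact this

end CostGraph

namespace CostGraph
variable {G : CostGraph}

lemma part2 (hzm : G.ZeroMatching) (hcard : 1 < (Set.univ : Set G.V).ncard)
    {FH : Set G.contractRed4.E} (hFH : G.contractRed4.TwoEC FH) :
    G.TwoEC (Subtype.val '' FH ∪ G.cycAll) ∧
      G.cost (Subtype.val '' FH ∪ G.cycAll)
        ≤ G.contractRed4.cost FH + 2 * {Q | G.IsRed4CycleOn Q}.ncard := by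
  haveI := G.finV
  haveI := G.finE
  haveI := G.contractRed4.finE
  classical
  set FL : Set G.E := Subtype.val '' FH ∪ G.cycAll with hFLdef
  have hVne : (Set.univ : Set G.V).Nonempty :=
    Set.nonempty_of_ncard_ne_zero (by omega)
  -- main connectivity: for every e, (FL \ {e}) connects everything
  have hconn : ∀ e : G.E, G.ConnectedOn Set.univ (FL \ {e}) := by
    intro e
    set B : Set G.contractRed4.E := FH \ {f : G.contractRed4.E | f.1 = e} with hBdef
    have hB : G.contractRed4.ConnectedOn Set.univ B := by
      by_cases hex : ∃ f₀ : G.contractRed4.E, f₀.1 = e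
      · obtain ⟨f₀, hf₀⟩ := hex
        have : {f : G.contractRed4.E | f.1 = e} = {f₀} := by
          ext f
          simp only [Set.mem_setOf_eq, Set.mem_singleton_iff]
          exact ⟨fun hh => Subtype.ext (hh.trans hf₀.symm), fun hh => hh ▸ hf₀⟩
        rw [hBdef, this]
        exact hFH.2.2 f₀
      · have : {f : G.contractRed4.E | f.1 = e} = ∅ := by
          ext f
          simp only [Set.mem_setOf_eq, Set.mem_empty_iff_false, iff_false]
          exact fun hh => hex ⟨f, hh⟩
        rw [hBdef, this, Set.diff_empty]
        exact hFH.2.1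
    have hBF : ∀ f ∈ B, f.1 ∈ FL \ {e} := by
      rintro f ⟨hf1, hf2⟩
      exact ⟨Or.inl ⟨f, hf1, rfl⟩, fun hh => hf2 (Set.mem_singleton_iff.mp hh)⟩
    have hcls : ∀ a b : G.V,
        Quotient.mk (Relation.EqvGen.setoid G.red4Rel) a
          = Quotient.mk (Relation.EqvGen.setoid G.red4Rel) b →
        G.Reachable Set.univ (FL \ {e}) a b := by
      intro a b hab
      rcases (mk_eq_iff hzm).mp hab with rfl | ⟨Q, h4, ha, hb⟩
      · exact .refl
      · refine reach_mono ?_ (cyc_conn (r4w h4) e ha hb)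
        rintro g ⟨hg1, hg2⟩
        exact ⟨Or.inr (mem_cycAll h4 hg1), hg2⟩
    refine ⟨hVne, fun x _ y _ => ?_⟩
    exact lift_reach hzm hBF hcls (hB.2 _ trivial _ trivial) x y rfl rfl
  constructor
  · refine ⟨hcard, ?_, hconn⟩
    -- plain connectivity via monotonicity, need some edge or handle directly
    refine ⟨hVne, fun x hx y hy => ?_⟩
    by_cases hE : Nonempty G.E
    · exact reach_mono (Set.diff_subset) ((hconn hE.some).2 x hx y hy)
    · -- no edges at all: but then contract graph has no edges and is still 2EC with ≥ 2 classes?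
      -- direct: use lift_reach with B = FH
      have hBF : ∀ f ∈ FH, f.1 ∈ FL := fun f hf => Or.inl ⟨f, hf, rfl⟩
      have hcls : ∀ a b : G.V,
          Quotient.mk (Relation.EqvGen.setoid G.red4Rel) a
            = Quotient.mk (Relation.EqvGen.setoid G.red4Rel) b →
          G.Reachable Set.univ FL a b := by
        intro a b hab
        rcases (mk_eq_iff hzm).mp hab with rfl | ⟨Q, h4, ha, hb⟩
        · exact .refl
        · refine reach_mono ?_ (cyc_conn (r4w h4) (r4w h4).e₁ ha hb)
          rintro g ⟨hg1, -⟩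
          exact Or.inr (mem_cycAll h4 hg1)
      exact lift_reach hzm hBF hcls (hFH.2.1.2 _ trivial _ trivial) x y rfl rfl
  · -- cost
    have hsplit : {e ∈ FL | ¬ G.isZero e}
        ⊆ {e ∈ Subtype.val '' FH | ¬ G.isZero e} ∪ {e ∈ G.cycAll | ¬ G.isZero e} := by
      rintro e ⟨he1 | he1, he2⟩
      · exact Or.inl ⟨he1, he2⟩
      · exact Or.inr ⟨he1, he2⟩
    have h1 : {e ∈ Subtype.val '' FH | ¬ G.isZero e}.ncard = G.contractRed4.cost FH := by
      have : {e ∈ Subtype.val '' FH | ¬ G.isZero e}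
          = Subtype.val '' {f ∈ FH | ¬ G.contractRed4.isZero f} := by
        ext e
        constructor
        · rintro ⟨⟨f, hf, rfl⟩, he2⟩
          exact ⟨f, ⟨hf, he2⟩, rfl⟩
        · rintro ⟨f, ⟨hf, hf2⟩, rfl⟩
          exact ⟨⟨f, hf, rfl⟩, hf2⟩
      rw [this, Set.ncard_image_of_injective _ Subtype.val_injective]
      rfl
    have h2 : {e ∈ G.cycAll | ¬ G.isZero e}.ncard ≤ 2 * {Q | G.IsRed4CycleOn Q}.ncard := by
      by_cases hS : {Q | G.IsRed4CycleOn Q} = ∅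
      · have : G.cycAll = ∅ := by
          rw [cycAll]
          ext e
          simp only [Set.mem_iUnion, Set.mem_empty_iff_false, iff_false, not_exists]
          intro Q h4
          exact absurd h4 (by rw [Set.eq_empty_iff_forall_notMem] at hS; exact hS Q)
        rw [this]
        simp
      · obtain ⟨Q₀, hQ₀⟩ := Set.nonempty_iff_ne_empty.mpr hS
        haveI : Nonempty G.E := ⟨(r4w hQ₀).e₁⟩
        set f2 : Set G.V → G.E :=
          fun Q => if h : G.IsRed4CycleOn Q then (r4w h).e₂ else Classical.arbitrary _ with hf2def
        set f4 : Set G.V → G.E :=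
          fun Q => if h : G.IsRed4CycleOn Q then (r4w h).e₄ else Classical.arbitrary _ with hf4def
        have hf2val : ∀ {Q} (h : G.IsRed4CycleOn Q), f2 Q = (r4w h).e₂ := by
          intro Q h; rw [hf2def]; simp [h]
        have hf4val : ∀ {Q} (h : G.IsRed4CycleOn Q), f4 Q = (r4w h).e₄ := by
          intro Q h; rw [hf4def]; simp [h]
        have hpair_sub : ∀ {Q} (h : G.IsRed4CycleOn Q),
            ({f2 Q, f4 Q} : Set G.E) ⊆ E4set h := by
          intro Q h e he
          rcases he with rfl | rfl
          · rw [hf2val h]; right; left; rfl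
          · rw [hf4val h]; right; right; right; rfl
        have hDcard : (⋃ Q ∈ {Q | G.IsRed4CycleOn Q}, ({f2 Q, f4 Q} : Set G.E)).ncard
            = 2 * {Q | G.IsRed4CycleOn Q}.ncard := by
          refine pair_union_count (Set.toFinite _) f2 f4 ?_ ?_
          · intro Q hQ
            rw [hf2val hQ, hf4val hQ]
            exact (r4w hQ).f24
          · intro Q hQ Q' hQ' hne
            by_contra hne'
            obtain ⟨e, he1, he2⟩ := Set.nonempty_iff_ne_empty.mpr hne'
            obtain ⟨a, b, hab⟩ := exists_pair (G.ends e)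
            have ha : a ∈ Q := E4_ends hQ (hpair_sub hQ he1) a (by rw [hab]; simp)
            have ha' : a ∈ Q' := E4_ends hQ' (hpair_sub hQ' he2) a (by rw [hab]; simp)
            exact hne (red4_disjoint hzm hQ hQ' ha ha')
        rw [← hDcard]
        refine Set.ncard_le_ncard ?_ (Set.toFinite _)
        rintro e ⟨he1, he2⟩
        simp only [cycAll, Set.mem_iUnion] at he1
        obtain ⟨Q, h4, heQ⟩ := he1
        refine Set.mem_iUnion₂.mpr ⟨Q, h4, ?_⟩
        rcases heQ with rfl | rfl | rfl | rfl
        · exact absurd (r4w h4).z1 he2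
        · exact Set.mem_insert_iff.mpr (Or.inl (hf2val h4).symm)
        · exact absurd (r4w h4).z3 he2
        · exact Set.mem_insert_iff.mpr (Or.inr (Set.mem_singleton_iff.mpr (hf4val h4).symm))
    calc G.cost FL ≤ ({e ∈ Subtype.val '' FH | ¬ G.isZero e}
          ∪ {e ∈ G.cycAll | ¬ G.isZero e}).ncard :=
        Set.ncard_le_ncard hsplit (Set.toFinite _)
      _ ≤ {e ∈ Subtype.val '' FH | ¬ G.isZero e}.ncard
          + {e ∈ G.cycAll | ¬ G.isZero e}.ncard := Set.ncard_union_le _ _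
      _ ≤ G.contractRed4.cost FH + 2 * {Q | G.IsRed4CycleOn Q}.ncard := by
          rw [h1]; exact Nat.add_le_add_left h2 _

end CostGraph


/-- Let `G` be a MAP instance with no `{0,1}`-edge-pairs having
exactly `q` redundant 4-cycles, and let `Ĝ` be obtained from `G` by contracting
all redundant 4-cycles. Then `opt(G) = opt(Ĝ) + 2q`. -/
theorem opt_contractRed4 (G : CostGraph) (hG : G.IsMAP) (h01 : G.NoZeroOnePair)
    (q : ℕ) (hq : {Q | G.IsRed4CycleOn Q}.ncard = q) :
    G.opt = G.contractRed4.opt + 2 * q := by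
  have hzm := hG.1
  have hGE := hG.2
  subst hq
  have hne1 : (G.cost '' {F | G.TwoEC F}).Nonempty := ⟨_, ⟨Set.univ, hGE, rfl⟩⟩
  have h1 : G.opt ∈ G.cost '' {F | G.TwoEC F} := Nat.sInf_mem hne1
  obtain ⟨F₀, hF₀2, hc₀⟩ := h1
  obtain ⟨h2ecA, hcostA⟩ := CostGraph.part1 hzm hF₀2
  have hA : G.contractRed4.opt ≤ G.contractRed4.cost {f | f.1 ∈ F₀} :=
    Nat.sInf_le ⟨_, h2ecA, rfl⟩
  have hne2 : (G.contractRed4.cost '' {F | G.contractRed4.TwoEC F}).Nonempty :=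
    ⟨_, ⟨{f | f.1 ∈ Set.univ}, (CostGraph.part1 hzm hGE).1, rfl⟩⟩
  have h2 : G.contractRed4.opt ∈ G.contractRed4.cost '' {F | G.contractRed4.TwoEC F} :=
    Nat.sInf_mem hne2
  obtain ⟨F₁, hF₁2, hc₁⟩ := h2
  obtain ⟨h2ecB, hcostB⟩ := CostGraph.part2 hzm hGE.1 hF₁2
  have hB : G.opt ≤ G.cost (Subtype.val '' F₁ ∪ G.cycAll) := Nat.sInf_le ⟨_, h2ecB, rfl⟩
  omega
end
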